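/- Let f : ℝ → ℝ₊ ∪ {∞} be nonnegative, proper, closed, convex, and suppose β ∈ bdry(dom f*) ∩ dom f*, where f* is a Legendre conjugate of a Legendre function f. Define R_β(x, ξ) = ξ + f*(β) − xβ and ϖ = max{ max{f*(y) : y ∈ bdry(dom f*) ∩ dom f*}, 0 }. If dom f* = [−a, b] for some a, b ≥ 0 with a + b > 0 (so dom f = ℝ and dom f_∞ = ℝ), then epi f + (0, ϖ) ⊆ epi f_∞, and consequently R_β(x, f(x)) + ϖ ≥ dist((x, f(x)), epi f_∞) for all x ∈ ℝ. -/

import Mathlib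

open Set Filter Topology

noncomputable section

/-- `h` is proper: finite somewhere and never `⊥`. -/
def EProper (h : ℝ → EReal) : Prop := (∃ x, h x ≠ ⊤) ∧ ∀ x, h x ≠ ⊥

/-- effective domain of an extended-real-valued function. -/
def EDom (h : ℝ → EReal) : Set ℝ := {x | h x ≠ ⊤}

/-- convexity of an extended-real-valued function on `ℝ`. -/
def EConvexFn (h : ℝ → EReal) : Prop :=
  ∀ x y a b : ℝ, 0 ≤ a → 0 ≤ b → a + b = 1 →
    h (a * x + b * y) ≤ (a : EReal) * h x + (b : EReal) * h y

/-- recession function of `h` with base point `y`: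
`h_∞(d) = sup_{t>0} (h(y + t d) − h(y))/t`. -/
noncomputable def erec (h : ℝ → EReal) (y : ℝ) (d : ℝ) : EReal :=
  ⨆ t : {t : ℝ // 0 < t}, ((((t : ℝ)⁻¹ : ℝ) : EReal)) * (h (y + (t : ℝ) * d) - h y)

/-- Fenchel conjugate. -/
noncomputable def econj (h : ℝ → EReal) (y : ℝ) : EReal :=
  ⨆ x : ℝ, ((x * y : ℝ) : EReal) - h x

/-- subdifferential of `h` at `x`. -/
def ESubdiff (h : ℝ → EReal) (x : ℝ) : Set ℝ :=
  {ξ | ∀ z : ℝ, h x + ((ξ * (z - x) : ℝ) : EReal) ≤ h z}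

/-- essential smoothness witnessed by the derivative function `h'`. -/
def EssSmoothWith (h : ℝ → EReal) (h' : ℝ → ℝ) : Prop :=
  (interior (EDom h)).Nonempty ∧
  (∀ x ∈ interior (EDom h), HasDerivAt (fun z => (h z).toReal) (h' x) x) ∧
  ∀ (u : ℕ → ℝ) (x0 : ℝ), (∀ n, u n ∈ interior (EDom h)) →
    Tendsto u atTop (𝓝 x0) → x0 ∈ frontier (EDom h) →
    Tendsto (fun n => |h' (u n)|) atTop atTop

def EssSmooth (h : ℝ → EReal) : Prop := ∃ h', EssSmoothWith h h'

/-- essential strict convexity: strict convexity on every convex subset of `dom ∂h`. -/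
def EssStrictConvex (h : ℝ → EReal) : Prop :=
  ∀ s : Set ℝ, s ⊆ {x | (ESubdiff h x).Nonempty} → Convex ℝ s →
    ∀ x ∈ s, ∀ y ∈ s, x ≠ y → ∀ a b : ℝ, 0 < a → 0 < b → a + b = 1 →
      h (a * x + b * y) < (a : EReal) * h x + (b : EReal) * h y

/-- Legendre function: proper, closed, convex, essentially smooth and
essentially strictly convex. -/
def ELegendre (h : ℝ → EReal) : Prop :=
  EProper h ∧ LowerSemicontinuous h ∧ EConvexFn h ∧ EssSmooth h ∧ EssStrictConvex h

/-- Fenchel–Young in real form. -/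
lemma my_fy (f : ℝ → EReal) (s x r : ℝ) (hs : econj f s ≠ ⊤)
    (hsb : econj f s ≠ ⊥) (hfx : f x ≤ (r : EReal)) :
    x * s ≤ r + (econj f s).toReal := by
  have h1 : ((x * s - r : ℝ) : EReal) ≤ econj f s := by
    have h2 : ((x * s - r : ℝ) : EReal) ≤ ((x * s : ℝ) : EReal) - f x := by
      rw [EReal.coe_sub]
      exact EReal.sub_le_sub le_rfl hfx
    exact h2.trans (le_iSup (fun z => ((z * s : ℝ) : EReal) - f z) x)
  rw [← EReal.coe_toReal hs hsb] at h1
  have := EReal.coe_le_coe_iff.mp h1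
  linarith

/-- conjugate is never ⊥ when f is finite somewhere and nonneg. -/
lemma my_conj_ne_bot (f : ℝ → EReal) (hpos : ∀ z, 0 ≤ f z) (x0 : ℝ) (hx0 : f x0 ≠ ⊤)
    (s : ℝ) : econj f s ≠ ⊥ := by
  have hb : f x0 ≠ ⊥ := ne_of_gt (lt_of_lt_of_le (by simp) (hpos x0))
  have h1 : ((x0 * s - (f x0).toReal : ℝ) : EReal) ≤ econj f s := by
    have h2 : ((x0 * s - (f x0).toReal : ℝ) : EReal) ≤ ((x0 * s : ℝ) : EReal) - f x0 := by
      rw [EReal.coe_sub, EReal.coe_toReal hx0 hb]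
    exact h2.trans (le_iSup (fun z => ((z * s : ℝ) : EReal) - f z) x0)
  intro hB2
  rw [hB2, le_bot_iff] at h1
  exact EReal.coe_ne_bot _ h1

/-- growth bound from conjugate being ⊤ at slope s > 0. -/
lemma my_grow (f : ℝ → EReal) (hconv : EConvexFn f) (hpos : ∀ z, 0 ≤ f z)
    (s x w r : ℝ) (hs0 : 0 < s) (hxw : x < w) (hr : 0 ≤ r)
    (htop : econj f s = ⊤) (hfx : f x ≤ (r : EReal)) :
    f w ≤ ((r + s * (w - x) : ℝ) : EReal) := by
  set M : ℝ := max (s * x) (s * w) + 1 with hM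
  obtain ⟨u, hu⟩ := iSup_eq_top.mp htop (M : ℝ) (EReal.coe_lt_top M)
  -- f u is finite
  have hut : f u ≠ ⊤ := by
    intro h
    rw [h] at hu
    simp at hu
  have hub : f u ≠ ⊥ := ne_of_gt (lt_of_lt_of_le (by simp) (hpos u))
  set c : ℝ := (f u).toReal with hc
  have hfu : f u = (c : EReal) := (EReal.coe_toReal hut hub).symm
  have hcu : M < u * s - c := by
    rw [hfu, ← EReal.coe_sub] at hu
    exact_mod_cast hu
  have hc0 : 0 ≤ c := by
    have := hpos u
    rw [hfu] at this
    exact_mod_cast this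
  -- u > w
  have huw : w < u := by
    have h1 : s * w < u * s := by
      have : s * w + 1 ≤ M := by rw [hM]; linarith [le_max_right (s*x) (s*w)]
      linarith
    nlinarith
  have hxt : f x ≠ ⊤ := ne_top_of_le_ne_top (EReal.coe_ne_top r) hfx
  have hxb : f x ≠ ⊥ := ne_of_gt (lt_of_lt_of_le (by simp) (hpos x))
  set cx : ℝ := (f x).toReal with hcx
  have hfxe : f x = (cx : EReal) := (EReal.coe_toReal hxt hxb).symm
  have hcxr : cx ≤ r := by rw [hfxe] at hfx; exact_mod_cast hfx
  have hcx0 : 0 ≤ cx := by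
    have := hpos x
    rw [hfxe] at this
    exact_mod_cast this
  -- convexity with weights
  have hd : 0 < u - x := by linarith
  set A : ℝ := (u - w) / (u - x) with hA
  set B : ℝ := (w - x) / (u - x) with hB
  have hA0 : 0 ≤ A := div_nonneg (by linarith) (by linarith)
  have hB0 : 0 ≤ B := div_nonneg (by linarith) (by linarith)
  have hAB : A + B = 1 := by rw [hA, hB]; field_simp; ring
  have hw : A * x + B * u = w := by rw [hA, hB]; field_simp; ring
  have hcv := hconv x u A B hA0 hB0 hAB
  rw [hw, hfxe, hfu] at hcv
  have hcv2 : f w ≤ ((A * cx + B * c : ℝ) : EReal) := by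
    rw [EReal.coe_add, EReal.coe_mul, EReal.coe_mul]
    exact hcv
  refine hcv2.trans ?_
  rw [EReal.coe_le_coe_iff]
  -- real arithmetic
  have hA1 : A ≤ 1 := by
    rw [hA, div_le_one hd]; linarith
  have h1 : A * cx ≤ r := by
    have := mul_le_mul hA1 hcxr hcx0 zero_le_one
    linarith
  have h2 : B * c ≤ s * (w - x) := by
    have hcle : c ≤ u * s - M := by linarith
    have hMx : s * x + 1 ≤ M := by rw [hM]; linarith [le_max_left (s*x) (s*w)]
    have h3 : B * c ≤ B * (u * s - M) := mul_le_mul_of_nonneg_left hcle hB0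
    have h4 : B * (u * s - M) ≤ s * (w - x) := by
      rw [hB, div_mul_eq_mul_div, div_le_iff₀ hd]
      nlinarith
    linarith
  linarith

/-- limiting argument. -/
lemma my_lim (v : EReal) (p q d : ℝ) (hd : 0 < d)
    (h : ∀ s, q < s → v ≤ ((p + s * d : ℝ) : EReal)) : v ≤ ((p + q * d : ℝ) : EReal) := by
  induction v using EReal.rec with
  | bot => exact bot_le
  | top => exact absurd (top_le_iff.mp (h (q+1) (by linarith))) (EReal.coe_ne_top _)
  | coe c =>
    rw [EReal.coe_le_coe_iff]
    by_contra hcon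
    push_neg at hcon
    set e : ℝ := c - p - q * d with he
    have he0 : 0 < e := by linarith
    have hpos2 : 0 < e / (2 * d) := by positivity
    have hs : q < q + e / (2 * d) := by linarith
    have := EReal.coe_le_coe_iff.mp (h (q + e / (2 * d)) hs)
    have hx : (q + e / (2 * d)) * d = q * d + e / 2 := by field_simp
    rw [hx] at this
    linarith


lemma my_econj_neg (f : ℝ → EReal) (s : ℝ) : econj (fun z => f (-z)) s = econj f (-s) := by
  unfold econj
  apply le_antisymm
  · refine iSup_le fun x => le_iSup_of_le (-x) (le_of_eq ?_)
    show ((x * s : ℝ) : EReal) - f (-x) = (((-x) * (-s) : ℝ) : EReal) - f (-x)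
    rw [neg_mul_neg]
  · refine iSup_le fun x => le_iSup_of_le (-x) (le_of_eq ?_)
    show ((x * (-s) : ℝ) : EReal) - f x = (((-x) * s : ℝ) : EReal) - f (-(-x))
    rw [neg_neg, show ((-x) * s : ℝ) = x * (-s) from by ring]

lemma my_econv_neg (f : ℝ → EReal) (h : EConvexFn f) : EConvexFn (fun z => f (-z)) := by
  intro x z p q hp hq hpq
  have := h (-x) (-z) p q hp hq hpq
  rw [show p * -x + q * -z = -(p * x + q * z) from by ring] at this
  exact this

lemma my_ubound (f : ℝ → EReal) (hconv : EConvexFn f) (hpos : ∀ z, 0 ≤ f z)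
    (a b : ℝ) (ha : 0 ≤ a) (hb : 0 ≤ b)
    (hdom : EDom (econj f) = Set.Icc (-a) b)
    (x r : ℝ) (hfx : f x ≤ (r : EReal)) (w : ℝ) :
    f w ≤ ((r + max (b * (w - x)) (-a * (w - x)) : ℝ) : EReal) := by
  have hr : 0 ≤ r := by
    have := (hpos x).trans hfx
    exact_mod_cast this
  rcases lt_trichotomy x w with hlt | heq | hgt
  · have hmax : max (b * (w - x)) (-a * (w - x)) = b * (w - x) :=
      max_eq_left (by nlinarith)
    rw [hmax]
    have key : ∀ s, b < s → f w ≤ ((r + s * (w - x) : ℝ) : EReal) := by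
      intro s hs
      have htop : econj f s = ⊤ := by
        by_contra hne
        have hmem : s ∈ EDom (econj f) := hne
        rw [hdom] at hmem
        exact absurd hmem.2 (not_le.mpr hs)
      exact my_grow f hconv hpos s x w r (by linarith) hlt hr htop hfx
    exact my_lim (f w) r b (w - x) (by linarith) key
  · subst heq
    simpa using hfx
  · have hmax : max (b * (w - x)) (-a * (w - x)) = -a * (w - x) :=
      max_eq_right (by nlinarith)
    rw [hmax]
    have key : ∀ s, a < s → f w ≤ ((r + s * (x - w) : ℝ) : EReal) := by
      intro s hs
      have htop : econj (fun z => f (-z)) s = ⊤ := by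
        rw [my_econj_neg]
        by_contra hne
        have hmem : -s ∈ EDom (econj f) := hne
        rw [hdom] at hmem
        exact absurd hmem.1 (not_le.mpr (by linarith))
      have hg := my_grow (fun z => f (-z)) (my_econv_neg f hconv) (fun z => hpos (-z))
        s (-x) (-w) r (by linarith) (by linarith) hr htop (by simpa using hfx)
      simp only [neg_neg] at hg
      rw [show (-w) - (-x) = x - w from by ring] at hg
      exact hg
    have h2 := my_lim (f w) r a (x - w) (by linarith) key
    rw [show a * (x - w) = -a * (w - x) from by ring] at h2
    exact h2

/-- Let `f` be a nonnegative Legendre function with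
`dom f* = [−a, b]`, `a, b ≥ 0`, `a + b > 0` (so `dom f = ℝ` and `dom f_∞ = ℝ`), and
let `β ∈ bdry(dom f*) ∩ dom f*`. With `R_β(x,ξ) = ξ + f*(β) − xβ` and
`ϖ = max{f*(−a), f*(b), 0}`, we have `epi f + (0,ϖ) ⊆ epi f_∞` and hence
`R_β(x, f(x)) + ϖ ≥ dist((x, f(x)), epi f_∞)` for all `x ∈ ℝ`. -/
theorem epi_shift_subset_and_dist_bound (f : ℝ → EReal) (hNonneg : ∀ x, 0 ≤ f x)
    (hLeg : ELegendre f) (y : ℝ) (hy : y ∈ EDom f)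
    (a b : ℝ) (ha : 0 ≤ a) (hb : 0 ≤ b) (hab : 0 < a + b)
    (hdom : EDom (econj f) = Set.Icc (-a) b)
    (β : ℝ) (hβ : β ∈ frontier (EDom (econj f)) ∩ EDom (econj f)) :
    (∀ x r : ℝ, f x ≤ (r : EReal) →
      erec f y x
        ≤ ((r + max (max ((econj f (-a)).toReal) ((econj f b).toReal)) 0 : ℝ) : EReal))
    ∧ ∀ x r : ℝ, f x = (r : EReal) →
        Metric.infDist ((x, r) : ℝ × ℝ) {q : ℝ × ℝ | erec f y q.1 ≤ (q.2 : EReal)}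
          ≤ r + (econj f β).toReal - x * β
            + max (max ((econj f (-a)).toReal) ((econj f b).toReal)) 0 := by
  obtain ⟨x0, hx0⟩ := hLeg.1.1
  have hconv : EConvexFn f := hLeg.2.2.1
  set W : ℝ := max (max ((econj f (-a)).toReal) ((econj f b).toReal)) 0 with hWdef
  have hW0 : 0 ≤ W := le_max_right _ _
  have hcb : ∀ s, econj f s ≠ ⊥ := my_conj_ne_bot f hNonneg x0 hx0
  have hbt : econj f b ≠ ⊤ := by
    have hmem : b ∈ EDom (econj f) := by rw [hdom]; exact ⟨by linarith, le_rfl⟩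
    exact hmem
  have hat : econj f (-a) ≠ ⊤ := by
    have hmem : -a ∈ EDom (econj f) := by rw [hdom]; exact ⟨le_rfl, by linarith⟩
    exact hmem
  have hBW : (econj f b).toReal ≤ W := (le_max_right _ _).trans (le_max_left _ _)
  have hAW : (econj f (-a)).toReal ≤ W := (le_max_left _ _).trans (le_max_left _ _)
  have part1 : ∀ x r : ℝ, f x ≤ (r : EReal) → erec f y x ≤ ((r + W : ℝ) : EReal) := by
    intro x r hfx
    have hr : 0 ≤ r := by exact_mod_cast (hNonneg x).trans hfx
    have hxb : x * b ≤ r + W := by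
      have := my_fy f b x r hbt (hcb b) hfx
      linarith
    have hxa : x * (-a) ≤ r + W := by
      have := my_fy f (-a) x r hat (hcb (-a)) hfx
      linarith
    refine iSup_le ?_
    rintro ⟨t, ht⟩
    dsimp only
    have hyt : f y ≠ ⊤ := hy
    have hyb : f y ≠ ⊥ := ne_of_gt (lt_of_lt_of_le (by simp) (hNonneg y))
    set fy : ℝ := (f y).toReal with hfy
    have hfye : f y = (fy : EReal) := (EReal.coe_toReal hyt hyb).symm
    have hub := my_ubound f hconv hNonneg a b ha hb hdom y fy hfye.le (y + t * x)
    rw [show y + t * x - y = t * x from by ring] at hub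
    have hmax : max (b * (t * x)) (-a * (t * x)) ≤ t * (r + W) := by
      apply max_le
      · calc b * (t * x) = t * (x * b) := by ring
          _ ≤ t * (r + W) := mul_le_mul_of_nonneg_left hxb ht.le
      · calc -a * (t * x) = t * (x * (-a)) := by ring
          _ ≤ t * (r + W) := mul_le_mul_of_nonneg_left hxa ht.le
    have hub2 : f (y + t * x) ≤ ((fy + t * (r + W) : ℝ) : EReal) :=
      hub.trans (EReal.coe_le_coe_iff.mpr (by linarith))
    have hwt : f (y + t * x) ≠ ⊤ := ne_top_of_le_ne_top (EReal.coe_ne_top _) hub2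
    have hwb : f (y + t * x) ≠ ⊥ := ne_of_gt (lt_of_lt_of_le (by simp) (hNonneg _))
    set c : ℝ := (f (y + t * x)).toReal with hcdef
    have hce : f (y + t * x) = (c : EReal) := (EReal.coe_toReal hwt hwb).symm
    have hcle : c ≤ fy + t * (r + W) := by
      rw [hce] at hub2
      exact_mod_cast hub2
    rw [hce, hfye, ← EReal.coe_sub, ← EReal.coe_mul, EReal.coe_le_coe_iff,
      inv_mul_le_iff₀ ht]
    linarith
  refine ⟨part1, ?_⟩
  intro x r hfx
  have hβt : econj f β ≠ ⊤ := hβ.2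
  have hfy2 := my_fy f β x r hβt (hcb β) hfx.le
  have hmem : ((x, r + W) : ℝ × ℝ) ∈ {q : ℝ × ℝ | erec f y q.1 ≤ (q.2 : EReal)} :=
    part1 x r hfx.le
  have hd := Metric.infDist_le_dist_of_mem (x := ((x, r) : ℝ × ℝ)) hmem
  have hdist : dist ((x, r) : ℝ × ℝ) ((x, r + W) : ℝ × ℝ) = W := by
    rw [Prod.dist_eq]
    simp [Real.dist_eq, abs_of_nonneg hW0, show r - (r + W) = -W from by ring, hW0]
  rw [hdist] at hd
  linarith
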